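/- Probabilistic Newman's lemma: if a PARS is strongly normalising (no infinite chains of proper parallel evolution ⇒_P¹) and locally confluent (any peak E ⇐_P¹ D ⇒_P¹ F closes via ↠*), then it is distribution confluent. -/

import Mathlib

open Relation
open scoped NNReal

abbrev PDist (A : Type) := List (ℝ≥0 × A)

namespace PPARS

variable {A X : Type}

/-- Total weight of a list distribution. -/
def weight (D : PDist A) : ℝ≥0 := (D.map Prod.fst).sum

/-- Scale every weight of a distribution by `α`. -/
def scale (α : ℝ≥0) (D : PDist A) : PDist A := D.map (fun pa => (α * pa.1, pa.2))

open Classical in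
/-- Total weight that `D` assigns to the element `a`. -/
noncomputable def wt (D : PDist A) (a : A) : ℝ≥0 :=
  (D.map (fun pa => if pa.2 = a then pa.1 else 0)).sum

/-- The Flip rule, closed under list contexts. -/
inductive FlipS : PDist A → PDist A → Prop
  | mk (E₁ E₂ : PDist A) (p q : ℝ≥0) (a b : A) :
      FlipS (E₁ ++ [(p,a),(q,b)] ++ E₂) (E₁ ++ [(q,b),(p,a)] ++ E₂)

/-- The Join rule, closed under list contexts. -/
inductive JoinS : PDist A → PDist A → Prop
  | mk (E₁ E₂ : PDist A) (p q : ℝ≥0) (a : A) :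
      JoinS (E₁ ++ [(p,a),(q,a)] ++ E₂) (E₁ ++ [(p+q,a)] ++ E₂)

/-- The Split rule, closed under list contexts. -/
inductive SplitS : PDist A → PDist A → Prop
  | mk (E₁ E₂ : PDist A) (p q : ℝ≥0) (a : A) :
      SplitS (E₁ ++ [(p+q,a)] ++ E₂) (E₁ ++ [(p,a),(q,a)] ++ E₂)

/-- One `∼`-step: congruence closure of Flip, Join and Split. -/
def SimStep (D E : PDist A) : Prop := FlipS D E ∨ JoinS D E ∨ SplitS D E

/-- One Flip-or-Join step. -/
def FJ (D E : PDist A) : Prop := FlipS D E ∨ JoinS D E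

/-- Distribution equivalence `≈`. -/
def DEquiv : PDist A → PDist A → Prop := ReflTransGen SimStep

/-- Parallel evolution `⇒_P` for a PARS relation `R`. -/
inductive PEvol (R : A → PDist A → Prop) : PDist A → PDist A → Prop
  | nil : PEvol R [] []
  | keep {ds ds' : PDist A} (p : ℝ≥0) (a : A) :
      PEvol R ds ds' → PEvol R ((p,a) :: ds) ((p,a) :: ds')
  | evolve {a : A} {D ds ds' : PDist A} (p : ℝ≥0) :
      R a D → PEvol R ds ds' → PEvol R ((p,a) :: ds) (scale p D ++ ds')

/-- Proper parallel evolution `⇒_P¹`: at least one element evolves. -/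
inductive PEvol1 (R : A → PDist A → Prop) : PDist A → PDist A → Prop
  | evolve {a : A} {D ds ds' : PDist A} (p : ℝ≥0) :
      R a D → PEvol R ds ds' → PEvol1 R ((p,a) :: ds) (scale p D ++ ds')
  | keep {ds ds' : PDist A} (p : ℝ≥0) (a : A) :
      PEvol1 R ds ds' → PEvol1 R ((p,a) :: ds) ((p,a) :: ds')

/-- The determinisation relation `↠ = ⇒_P ∪ ≈`. -/
def Red (R : A → PDist A → Prop) (D E : PDist A) : Prop := PEvol R D E ∨ DEquiv D E

/-- `R` defines a PARS: successor distributions are normalised. -/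
def IsPARS (R : A → PDist A → Prop) : Prop := ∀ a D, R a D → weight D = 1

/-- A terminal element has no successor distribution. -/
def Terminal (R : A → PDist A → Prop) (a : A) : Prop := ∀ D, ¬ R a D

/-- A terminal distribution contains only terminal elements. -/
def TerminalD (R : A → PDist A → Prop) (D : PDist A) : Prop := ∀ pa ∈ D, Terminal R pa.2

/-- Classical confluence of a relation. -/
def Confluent (r : X → X → Prop) : Prop :=
  ∀ a b c, ReflTransGen r a b → ReflTransGen r a c →
    ∃ d, ReflTransGen r b d ∧ ReflTransGen r c d

/-- Raw (finite) computation trees. -/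
inductive CTree (A : Type) where
  | leaf (a : A)
  | node (a : A) (cs : List (ℝ≥0 × CTree A))

def CTree.root : CTree A → A
  | .leaf a => a
  | .node a _ => a

/-- `IsTree R t a`: `t` is a computation tree of the PARS `R` with root `a`. -/
inductive IsTree (R : A → PDist A → Prop) : CTree A → A → Prop
  | leaf (a : A) : IsTree R (.leaf a) a
  | node (a : A) (cs : List (ℝ≥0 × CTree A)) :
      R a (cs.map fun x => (x.1, x.2.root)) →
      (∀ x ∈ cs, IsTree R x.2 x.2.root) →
      IsTree R (.node a cs) a

mutual
/-- Support of a computation tree. -/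
def supp : CTree A → PDist A
  | .leaf a => [(1, a)]
  | .node _ cs => suppL cs
def suppL : List (ℝ≥0 × CTree A) → PDist A
  | [] => []
  | (p, t) :: ts => scale p (supp t) ++ suppL ts
end

/-- A tree is maximal when all its leaves are terminal elements. -/
inductive MaximalT (R : A → PDist A → Prop) : CTree A → Prop
  | leaf (a : A) : Terminal R a → MaximalT R (.leaf a)
  | node (a : A) (cs : List (ℝ≥0 × CTree A)) :
      (∀ x ∈ cs, MaximalT R x.2) → MaximalT R (.node a cs)

end PPARS

namespace PNL
open PPARS Relation

variable {A : Type} {R : A → PDist A → Prop}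

/- ### scale lemmas -/
@[simp] lemma scale_nil (p : ℝ≥0) : scale p ([] : PDist A) = [] := rfl

@[simp] lemma scale_cons (p q : ℝ≥0) (a : A) (D : PDist A) :
    scale p ((q,a) :: D) = (p*q, a) :: scale p D := rfl

@[simp] lemma scale_append (p : ℝ≥0) (D E : PDist A) :
    scale p (D ++ E) = scale p D ++ scale p E := List.map_append

lemma scale_scale (p q : ℝ≥0) (D : PDist A) : scale p (scale q D) = scale (p*q) D := by
  induction D with
  | nil => rfl
  | cons x D ih => obtain ⟨r, b⟩ := x; simp only [scale_cons, ih, mul_assoc]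

@[simp] lemma scale_one (D : PDist A) : scale 1 D = D := by
  induction D with
  | nil => rfl
  | cons x D ih => obtain ⟨r, b⟩ := x; simp only [scale_cons, ih, one_mul]

/- ### DEquiv basics -/
lemma simStep_symm {D E : PDist A} (h : SimStep D E) : SimStep E D := by
  rcases h with h | h | h
  · cases h with
    | mk E₁ E₂ p q a b => exact Or.inl (FlipS.mk E₁ E₂ q p b a)
  · cases h with
    | mk E₁ E₂ p q a => exact Or.inr (Or.inr (SplitS.mk E₁ E₂ p q a))
  · cases h with
    | mk E₁ E₂ p q a => exact Or.inr (Or.inl (JoinS.mk E₁ E₂ p q a))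

lemma dequiv_refl (D : PDist A) : DEquiv D D := ReflTransGen.refl

lemma dequiv_trans {D E F : PDist A} (h : DEquiv D E) (h' : DEquiv E F) : DEquiv D F :=
  ReflTransGen.trans h h'

lemma dequiv_symm {D E : PDist A} (h : DEquiv D E) : DEquiv E D :=
  by
  induction h with
  | refl => exact ReflTransGen.refl
  | tail _ hs ih => exact ReflTransGen.head (simStep_symm hs) ih

lemma dequiv_single {D E : PDist A} (h : SimStep D E) : DEquiv D E :=
  ReflTransGen.single h

lemma simStep_context {D E : PDist A} (K M : PDist A) (h : SimStep D E) :
    SimStep (K ++ D ++ M) (K ++ E ++ M) := by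
  rcases h with h | h | h
  · cases h with
    | mk E₁ E₂ p q a b =>
      exact Or.inl (by simpa [List.append_assoc] using FlipS.mk (K ++ E₁) (E₂ ++ M) p q a b)
  · cases h with
    | mk E₁ E₂ p q a =>
      exact Or.inr (Or.inl (by simpa [List.append_assoc] using JoinS.mk (K ++ E₁) (E₂ ++ M) p q a))
  · cases h with
    | mk E₁ E₂ p q a =>
      exact Or.inr (Or.inr (by simpa [List.append_assoc] using SplitS.mk (K ++ E₁) (E₂ ++ M) p q a))

lemma dequiv_context {D E : PDist A} (K M : PDist A) (h : DEquiv D E) :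
    DEquiv (K ++ D ++ M) (K ++ E ++ M) :=
  ReflTransGen.lift (fun L => K ++ L ++ M) (fun _ _ hs => simStep_context K M hs) _ _ h

lemma dequiv_right {D E : PDist A} (M : PDist A) (h : DEquiv D E) :
    DEquiv (D ++ M) (E ++ M) := by
  simpa using dequiv_context [] M h

lemma dequiv_left {D E : PDist A} (K : PDist A) (h : DEquiv D E) :
    DEquiv (K ++ D) (K ++ E) := by
  simpa using dequiv_context K [] h

lemma dequiv_append {D D' E E' : PDist A} (h : DEquiv D D') (h' : DEquiv E E') :
    DEquiv (D ++ E) (D' ++ E') :=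
  dequiv_trans (dequiv_right E h) (dequiv_left D' h')

lemma dequiv_cons {D E : PDist A} (x : ℝ≥0 × A) (h : DEquiv D E) :
    DEquiv (x :: D) (x :: E) := by
  simpa using dequiv_left [x] h

lemma dequiv_bubble (L : PDist A) (x : ℝ≥0 × A) : DEquiv (L ++ [x]) (x :: L) := by
  induction L with
  | nil => simp [dequiv_refl]
  | cons y L ih =>
    have h1 : DEquiv (y :: (L ++ [x])) (y :: (x :: L)) := dequiv_cons y ih
    have h2 : SimStep (y :: x :: L) (x :: y :: L) := by
      obtain ⟨p, a⟩ := y; obtain ⟨q, b⟩ := x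
      exact Or.inl (by simpa using FlipS.mk [] L p q a b)
    exact dequiv_trans (by simpa using h1) (dequiv_single h2)

lemma dequiv_comm (L M : PDist A) : DEquiv (L ++ M) (M ++ L) := by
  induction M generalizing L with
  | nil => simp [dequiv_refl]
  | cons x M ih =>
    have h1 : L ++ x :: M = (L ++ [x]) ++ M := by simp
    rw [h1]
    refine dequiv_trans (dequiv_right M (dequiv_bubble L x)) ?_
    have : DEquiv (x :: (L ++ M)) (x :: (M ++ L)) := dequiv_cons x (ih L)
    simpa using this

lemma simStep_scale {D E : PDist A} (p : ℝ≥0) (h : SimStep D E) :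
    SimStep (scale p D) (scale p E) := by
  rcases h with h | h | h
  · cases h with
    | mk E₁ E₂ q r a b =>
      exact Or.inl (by simpa using FlipS.mk (scale p E₁) (scale p E₂) (p*q) (p*r) a b)
  · cases h with
    | mk E₁ E₂ q r a =>
      exact Or.inr (Or.inl (by simpa [mul_add] using JoinS.mk (scale p E₁) (scale p E₂) (p*q) (p*r) a))
  · cases h with
    | mk E₁ E₂ q r a =>
      exact Or.inr (Or.inr (by simpa [mul_add] using SplitS.mk (scale p E₁) (scale p E₂) (p*q) (p*r) a))

lemma dequiv_scale {D E : PDist A} (p : ℝ≥0) (h : DEquiv D E) :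
    DEquiv (scale p D) (scale p E) :=
  ReflTransGen.lift (scale p) (fun _ _ hs => simStep_scale p hs) _ _ h

lemma scale_merge (u v : ℝ≥0) (K : PDist A) :
    DEquiv (scale u K ++ scale v K) (scale (u+v) K) := by
  induction K with
  | nil => simp [dequiv_refl]
  | cons x K ih =>
    obtain ⟨r, b⟩ := x
    have h1 : DEquiv ((u*r, b) :: (scale u K ++ ((v*r, b) :: scale v K)))
        ((u*r, b) :: ((v*r, b) :: (scale u K ++ scale v K))) := by
      refine dequiv_cons _ ?_
      have : scale u K ++ ((v*r, b) :: scale v K) = (scale u K ++ [(v*r,b)]) ++ scale v K := by simp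
      rw [this]
      have h2 := dequiv_right (scale v K) (dequiv_bubble (scale u K) (v*r, b))
      simpa using h2
    have h3 : SimStep ((u*r, b) :: ((v*r, b) :: (scale u K ++ scale v K)))
        (((u+v)*r, b) :: (scale u K ++ scale v K)) := by
      have := JoinS.mk [] (scale u K ++ scale v K) (u*r) (v*r) b
      refine Or.inr (Or.inl ?_)
      simpa [add_mul] using this
    refine dequiv_trans (by simpa using h1) ?_
    refine dequiv_trans (dequiv_single h3) ?_
    simpa using dequiv_cons ((u+v)*r, b) ih

end PNL
namespace PNL
open PPARS Relation

variable {A : Type} {R : A → PDist A → Prop}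

/- ### PEvol basics -/
lemma pevol_refl (D : PDist A) : PEvol R D D := by
  induction D with
  | nil => exact PEvol.nil
  | cons x D ih => obtain ⟨p, a⟩ := x; exact PEvol.keep p a ih

lemma pevol_append {D₁ E₁ D₂ E₂ : PDist A} (h₁ : PEvol R D₁ E₁) (h₂ : PEvol R D₂ E₂) :
    PEvol R (D₁ ++ D₂) (E₁ ++ E₂) := by
  induction h₁ with
  | nil => simpa using h₂
  | keep p a _ ih => exact PEvol.keep p a ih
  | evolve p hr _ ih => simpa [List.append_assoc] using PEvol.evolve p hr ih

lemma pevol1_pevol {D E : PDist A} (h : PEvol1 R D E) : PEvol R D E := by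
  induction h with
  | evolve p hr h' => exact PEvol.evolve p hr h'
  | keep p a _ ih => exact PEvol.keep p a ih

/- ### fragments and multi-evolution -/
inductive Frag (R : A → PDist A → Prop) : ℝ≥0 → A → PDist A → Prop
  | keep (p : ℝ≥0) (a : A) : Frag R p a [(p,a)]
  | evolve {a : A} {X : PDist A} (p : ℝ≥0) : R a X → Frag R p a (scale p X)
  | split {p q : ℝ≥0} {a : A} {B C : PDist A} :
      Frag R p a B → Frag R q a C → Frag R (p+q) a (B ++ C)

inductive MEvol (R : A → PDist A → Prop) : PDist A → PDist A → Prop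
  | nil : MEvol R [] []
  | cons {p : ℝ≥0} {a : A} {B ds Z : PDist A} :
      Frag R p a B → MEvol R ds Z → MEvol R ((p,a) :: ds) (B ++ Z)

lemma mevol_refl (D : PDist A) : MEvol R D D := by
  induction D with
  | nil => exact MEvol.nil
  | cons x D ih =>
    obtain ⟨p, a⟩ := x
    exact MEvol.cons (Frag.keep p a) ih

lemma mevol_append {D₁ E₁ D₂ E₂ : PDist A} (h₁ : MEvol R D₁ E₁) (h₂ : MEvol R D₂ E₂) :
    MEvol R (D₁ ++ D₂) (E₁ ++ E₂) := by
  induction h₁ with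
  | nil => simpa using h₂
  | cons hf _ ih => simpa [List.append_assoc] using MEvol.cons hf ih

lemma mevol_append_inv {X Y Z : PDist A} (h : MEvol R (X ++ Y) Z) :
    ∃ Z₁ Z₂, MEvol R X Z₁ ∧ MEvol R Y Z₂ ∧ Z = Z₁ ++ Z₂ := by
  induction X generalizing Z with
  | nil => exact ⟨[], Z, MEvol.nil, by simpa using h, by simp⟩
  | cons x X ih =>
    obtain ⟨p, a⟩ := x
    cases h with
    | cons hf h' =>
      obtain ⟨Z₁, Z₂, hZ₁, hZ₂, rfl⟩ := ih h'
      exact ⟨_ ++ Z₁, Z₂, MEvol.cons hf hZ₁, hZ₂, by simp⟩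

lemma pevol_mevol {D E : PDist A} (h : PEvol R D E) : MEvol R D E := by
  induction h with
  | nil => exact MEvol.nil
  | keep p a _ ih => exact MEvol.cons (Frag.keep p a) ih
  | evolve p hr _ ih => exact MEvol.cons (Frag.evolve p hr) ih

lemma frag_scale {p : ℝ≥0} {a : A} {B : PDist A} (u : ℝ≥0) (h : Frag R p a B) :
    Frag R (u*p) a (scale u B) := by
  induction h with
  | keep p a => simpa using Frag.keep (u*p) a
  | evolve p hr => rw [scale_scale]; exact Frag.evolve _ hr
  | split h₁ h₂ ih₁ ih₂ => simpa [mul_add] using Frag.split ih₁ ih₂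

lemma mevol_scale {D E : PDist A} (u : ℝ≥0) (h : MEvol R D E) :
    MEvol R (scale u D) (scale u E) := by
  induction h with
  | nil => exact MEvol.nil
  | cons hf _ ih => simpa using MEvol.cons (frag_scale u hf) ih

/- ### relating to Red -/
lemma red_rtg_append {D₁ E₁ D₂ E₂ : PDist A}
    (h₁ : ReflTransGen (Red R) D₁ E₁) (h₂ : ReflTransGen (Red R) D₂ E₂) :
    ReflTransGen (Red R) (D₁ ++ D₂) (E₁ ++ E₂) := by
  have s1 : ReflTransGen (Red R) (D₁ ++ D₂) (E₁ ++ D₂) := by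
    refine ReflTransGen.lift (fun L => L ++ D₂) (fun x y hxy => ?_) _ _ h₁
    rcases hxy with h | h
    · exact Or.inl (pevol_append h (pevol_refl D₂))
    · exact Or.inr (dequiv_right D₂ h)
  have s2 : ReflTransGen (Red R) (E₁ ++ D₂) (E₁ ++ E₂) := by
    refine ReflTransGen.lift (fun L => E₁ ++ L) (fun x y hxy => ?_) _ _ h₂
    rcases hxy with h | h
    · exact Or.inl (pevol_append (pevol_refl E₁) h)
    · exact Or.inr (dequiv_left E₁ h)
  exact s1.trans s2

lemma frag_red {p : ℝ≥0} {a : A} {B : PDist A} (h : Frag R p a B) :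
    ReflTransGen (Red R) [(p,a)] B := by
  induction h with
  | keep p a => exact ReflTransGen.refl
  | evolve p hr =>
    refine ReflTransGen.single (Or.inl ?_)
    simpa using PEvol.evolve p hr PEvol.nil
  | split h₁ h₂ ih₁ ih₂ =>
    rename_i p' q' a' B' C'
    have hs : DEquiv [(p'+q', a')] [(p',a'),(q',a')] :=
      dequiv_single (Or.inr (Or.inr (by simpa using SplitS.mk [] [] p' q' a')))
    have hr : ReflTransGen (Red R) ([(p',a')] ++ [(q',a')]) (B' ++ C') := red_rtg_append ih₁ ih₂
    exact ReflTransGen.head (Or.inr hs) (by simpa using hr)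

lemma mevol_red {D E : PDist A} (h : MEvol R D E) : ReflTransGen (Red R) D E := by
  induction h with
  | nil => exact ReflTransGen.refl
  | cons hf hm ih =>
    rename_i p' a' B' ds' Z'
    have := red_rtg_append (frag_red hf) ih
    simpa using this

/- ### the big-step relation -/
def Step2 (R : A → PDist A → Prop) (D E : PDist A) : Prop :=
  ∃ Z, MEvol R D Z ∧ DEquiv Z E

def Reaches (R : A → PDist A → Prop) : PDist A → PDist A → Prop :=
  ReflTransGen (Step2 R)

lemma rtg_mono_of {α : Type} {r s : α → α → Prop}
    (h : ∀ x y, r x y → ReflTransGen s x y) {x y : α}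
    (hr : ReflTransGen r x y) : ReflTransGen s x y := by
  induction hr with
  | refl => exact ReflTransGen.refl
  | tail _ hstep ih => exact ih.trans (h _ _ hstep)

lemma red_step2 {D E : PDist A} (h : Red R D E) : Step2 R D E := by
  rcases h with h | h
  · exact ⟨E, pevol_mevol h, dequiv_refl E⟩
  · exact ⟨D, mevol_refl D, h⟩

lemma step2_red_rtg {D E : PDist A} (h : Step2 R D E) : ReflTransGen (Red R) D E := by
  obtain ⟨Z, hM, hE⟩ := h
  exact (mevol_red hM).tail (Or.inr hE)

lemma reaches_iff_red_rtg {D E : PDist A} :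
    Reaches R D E ↔ ReflTransGen (Red R) D E := by
  constructor
  · exact rtg_mono_of (fun _ _ h => step2_red_rtg h)
  · exact rtg_mono_of (fun _ _ h => ReflTransGen.single (red_step2 h))

lemma dequiv_reaches {D E : PDist A} (h : DEquiv D E) : Reaches R D E :=
  ReflTransGen.single ⟨D, mevol_refl D, h⟩

lemma mevol_reaches {D E : PDist A} (h : MEvol R D E) : Reaches R D E :=
  ReflTransGen.single ⟨E, h, dequiv_refl E⟩

lemma reaches_scale {D E : PDist A} (u : ℝ≥0) (h : Reaches R D E) :
    Reaches R (scale u D) (scale u E) := by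
  refine ReflTransGen.lift (scale u) (fun x y hxy => ?_) _ _ h
  obtain ⟨Z, hM, hE⟩ := hxy
  exact ⟨scale u Z, mevol_scale u hM, dequiv_scale u hE⟩

end PNL
namespace PNL
open PPARS Relation

variable {A : Type} {R : A → PDist A → Prop}

lemma frag_cut {r : ℝ≥0} {a : A} {Z : PDist A} (h : Frag R r a Z) :
    ∀ p q : ℝ≥0, p + q = r →
      ∃ B C, Frag R p a B ∧ Frag R q a C ∧ DEquiv (B ++ C) Z := by
  induction h with
  | keep r a =>
    intro p q hpq
    refine ⟨[(p,a)], [(q,a)], Frag.keep p a, Frag.keep q a, ?_⟩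
    subst hpq
    exact dequiv_single (Or.inr (Or.inl (by simpa using JoinS.mk [] [] p q a)))
  | evolve r hr =>
    intro p q hpq
    refine ⟨_, _, Frag.evolve p hr, Frag.evolve q hr, ?_⟩
    rw [← hpq]
    exact scale_merge p q _
  | split hB hC ihB ihC =>
    rename_i r₁ r₂ a' B' C'
    intro p q hpq
    rcases le_total p r₁ with hle | hle
    · obtain ⟨B₁, C₁, hB₁, hC₁, hD₁⟩ := ihB p (r₁ - p) (add_tsub_cancel_of_le hle)
      have hq : q = (r₁ - p) + r₂ := by
        have : p + q = p + ((r₁ - p) + r₂) := by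
          rw [← add_assoc, add_tsub_cancel_of_le hle, hpq]
        exact add_left_cancel this
      refine ⟨B₁, C₁ ++ C', hB₁, ?_, ?_⟩
      · rw [hq]; exact Frag.split hC₁ hC
      · have he : B₁ ++ (C₁ ++ C') = (B₁ ++ C₁) ++ C' := (List.append_assoc _ _ _).symm
        rw [he]; exact dequiv_right C' hD₁
    · have harr : (p - r₁) + q = r₂ := by
        have h2 : r₁ + ((p - r₁) + q) = r₁ + r₂ := by
          rw [← add_assoc, add_tsub_cancel_of_le hle, hpq]
        exact add_left_cancel h2
      obtain ⟨B₂, C₂, hB₂, hC₂, hD₂⟩ := ihC (p - r₁) q harr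
      refine ⟨B' ++ B₂, C₂, ?_, hC₂, ?_⟩
      · have h3 : r₁ + (p - r₁) = p := add_tsub_cancel_of_le hle
        rw [← h3]; exact Frag.split hB hB₂
      · rw [List.append_assoc]
        exact dequiv_left B' hD₂

lemma mevol_cons_inv {p : ℝ≥0} {a : A} {ds Z : PDist A}
    (h : MEvol R ((p,a) :: ds) Z) :
    ∃ B Z', Frag R p a B ∧ MEvol R ds Z' ∧ Z = B ++ Z' := by
  cases h with
  | cons hf hm => exact ⟨_, _, hf, hm, rfl⟩

lemma sim_step {G E E₀ : PDist A} (h : SimStep G E) (hm : MEvol R E E₀) :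
    ∃ G₀, MEvol R G G₀ ∧ DEquiv G₀ E₀ := by
  rcases h with h | h | h
  · -- Flip : G = K ++ (p,a)::(q,b)::M , E = K ++ (q,b)::(p,a)::M
    cases h with
    | mk K M p q a b =>
      rw [List.append_assoc] at hm
      obtain ⟨Z₁, Z₂, hK, hmid, rfl⟩ := mevol_append_inv (X := K) (Y := [(q,b),(p,a)] ++ M) hm
      obtain ⟨Bb, Z₃, hfb, hmid', rfl⟩ := mevol_cons_inv hmid
      obtain ⟨Ba, Z₄, hfa, hM, rfl⟩ := mevol_cons_inv hmid'
      refine ⟨Z₁ ++ (Ba ++ (Bb ++ Z₄)), ?_, ?_⟩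
      · rw [List.append_assoc]
        refine mevol_append hK ?_
        simpa using MEvol.cons hfa (MEvol.cons hfb hM)
      · refine dequiv_left Z₁ ?_
        have h1 : DEquiv ((Ba ++ Bb) ++ Z₄) ((Bb ++ Ba) ++ Z₄) :=
          dequiv_right Z₄ (dequiv_comm Ba Bb)
        simpa [List.append_assoc] using h1
  · -- Join : G = K ++ (p,a)::(q,a)::M , E = K ++ (p+q,a)::M
    cases h with
    | mk K M p q a =>
      rw [List.append_assoc] at hm
      obtain ⟨Z₁, Z₂, hK, hmid, rfl⟩ := mevol_append_inv (X := K) (Y := [(p+q,a)] ++ M) hm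
      obtain ⟨B, Z₄, hf, hM, rfl⟩ := mevol_cons_inv hmid
      obtain ⟨B₁, B₂, hB₁, hB₂, hD⟩ := frag_cut hf p q rfl
      refine ⟨Z₁ ++ (B₁ ++ (B₂ ++ Z₄)), ?_, ?_⟩
      · rw [List.append_assoc]
        refine mevol_append hK ?_
        simpa using MEvol.cons hB₁ (MEvol.cons hB₂ hM)
      · refine dequiv_left Z₁ ?_
        have h1 : DEquiv ((B₁ ++ B₂) ++ Z₄) (B ++ Z₄) := dequiv_right Z₄ hD
        simpa [List.append_assoc] using h1
  · -- Split : G = K ++ (p+q,a)::M , E = K ++ (p,a)::(q,a)::M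
    cases h with
    | mk K M p q a =>
      rw [List.append_assoc] at hm
      obtain ⟨Z₁, Z₂, hK, hmid, rfl⟩ := mevol_append_inv (X := K) (Y := [(p,a),(q,a)] ++ M) hm
      obtain ⟨B₁, Z₃, hf1, hmid', rfl⟩ := mevol_cons_inv hmid
      obtain ⟨B₂, Z₄, hf2, hM, rfl⟩ := mevol_cons_inv hmid'
      refine ⟨Z₁ ++ ((B₁ ++ B₂) ++ Z₄), ?_, ?_⟩
      · rw [List.append_assoc]
        refine mevol_append hK ?_
        simpa using MEvol.cons (Frag.split hf1 hf2) hM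
      · rw [List.append_assoc]
        exact dequiv_refl _

lemma sim_star {G E E₀ : PDist A} (h : DEquiv G E) (hm : MEvol R E E₀) :
    ∃ G₀, MEvol R G G₀ ∧ DEquiv G₀ E₀ := by
  induction h using ReflTransGen.head_induction_on with
  | refl => exact ⟨E₀, hm, dequiv_refl E₀⟩
  | head hstep _ ih =>
    obtain ⟨Z₁, hZ₁, hZE⟩ := ih
    obtain ⟨G₀, hG₀, hGZ⟩ := sim_step hstep hZ₁
    exact ⟨G₀, hG₀, hGZ.trans hZE⟩

lemma reaches_append_inv {D₁ D₂ E : PDist A} (h : Reaches R (D₁ ++ D₂) E) :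
    ∃ E₁ E₂, Reaches R D₁ E₁ ∧ Reaches R D₂ E₂ ∧ DEquiv (E₁ ++ E₂) E := by
  induction h with
  | refl => exact ⟨D₁, D₂, ReflTransGen.refl, ReflTransGen.refl, dequiv_refl _⟩
  | tail _ hstep ih =>
    obtain ⟨E₁, E₂, h₁, h₂, hD⟩ := ih
    obtain ⟨Z₀, hM₀, hE₀⟩ := hstep
    obtain ⟨Z, hZM, hZD⟩ := sim_star hD hM₀
    obtain ⟨W₁, W₂, hW₁, hW₂, rfl⟩ := mevol_append_inv hZM
    exact ⟨W₁, W₂, h₁.tail ⟨W₁, hW₁, dequiv_refl _⟩, h₂.tail ⟨W₂, hW₂, dequiv_refl _⟩,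
      hZD.trans hE₀⟩

lemma reaches_append {D₁ E₁ D₂ E₂ : PDist A}
    (h₁ : Reaches R D₁ E₁) (h₂ : Reaches R D₂ E₂) :
    Reaches R (D₁ ++ D₂) (E₁ ++ E₂) := by
  rw [reaches_iff_red_rtg] at *
  exact red_rtg_append h₁ h₂

end PNL
namespace PNL
open PPARS Relation

variable {A : Type} {R : A → PDist A → Prop}

/- ### element predicates and terminality -/
lemma join_forall (E₁ E₂ : PDist A) (p q : ℝ≥0) (a : A) (P : A → Prop) :
    (∀ x ∈ E₁ ++ [(p,a),(q,a)] ++ E₂, P x.2) ↔ (∀ x ∈ E₁ ++ [(p+q,a)] ++ E₂, P x.2) := by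
  constructor <;> intro hall x hx
  · rcases List.mem_append.1 hx with hx | hx
    · rcases List.mem_append.1 hx with hx | hx
      · exact hall x (by simp [hx])
      · have hx' : x = (p+q, a) := by simpa using hx
        subst hx'
        exact hall (p,a) (by simp)
    · exact hall x (by simp [hx])
  · rcases List.mem_append.1 hx with hx | hx
    · rcases List.mem_append.1 hx with hx | hx
      · exact hall x (by simp [hx])
      · have hx' : x = (p, a) ∨ x = (q, a) := by simpa using hx
        rcases hx' with rfl | rfl
        · exact hall (p+q,a) (by simp)
        · exact hall (p+q,a) (by simp)
    · exact hall x (by simp [hx])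

lemma simStep_forall {D E : PDist A} (P : A → Prop) (h : SimStep D E) :
    (∀ x ∈ D, P x.2) ↔ (∀ x ∈ E, P x.2) := by
  rcases h with h | h | h
  · cases h with
    | mk E₁ E₂ p q a b =>
      have hperm : (E₁ ++ [(p,a),(q,b)] ++ E₂).Perm (E₁ ++ [(q,b),(p,a)] ++ E₂) := by
        rw [List.append_assoc, List.append_assoc]
        exact List.Perm.append_left E₁ (List.Perm.swap _ _ _)
      constructor <;> intro hall x hx
      · exact hall x (hperm.mem_iff.2 hx)
      · exact hall x (hperm.mem_iff.1 hx)
  · cases h with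
    | mk E₁ E₂ p q a => exact join_forall E₁ E₂ p q a P
  · cases h with
    | mk E₁ E₂ p q a => exact (join_forall E₁ E₂ p q a P).symm

lemma dequiv_forall {D E : PDist A} (P : A → Prop) (h : DEquiv D E) :
    (∀ x ∈ D, P x.2) ↔ (∀ x ∈ E, P x.2) := by
  induction h with
  | refl => rfl
  | tail _ hstep ih => exact ih.trans (simStep_forall P hstep)

lemma dequiv_terminal {D E : PDist A} (h : DEquiv D E) (hT : TerminalD R D) :
    TerminalD R E := (dequiv_forall (Terminal R) h).1 hT

lemma terminal_append_iff {D E : PDist A} :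
    TerminalD R (D ++ E) ↔ TerminalD R D ∧ TerminalD R E := by
  constructor
  · intro h; exact ⟨fun x hx => h x (by simp [hx]), fun x hx => h x (by simp [hx])⟩
  · rintro ⟨h₁, h₂⟩ x hx
    rcases List.mem_append.1 hx with hx | hx
    · exact h₁ x hx
    · exact h₂ x hx

lemma terminal_scale {u : ℝ≥0} {D : PDist A} (h : TerminalD R D) :
    TerminalD R (scale u D) := by
  intro x hx
  simp only [scale, List.mem_map] at hx
  obtain ⟨y, hy, rfl⟩ := hx
  exact h y hy

/- ### frozen distributions only move within their ≈-class -/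
lemma frag_of_terminal {p : ℝ≥0} {a : A} {B : PDist A}
    (h : Frag R p a B) : Terminal R a → DEquiv [(p,a)] B ∧ ∀ x ∈ B, x.2 = a := by
  induction h with
  | keep p a => exact fun _ => ⟨dequiv_refl _, by simp⟩
  | evolve p hr => exact fun ht => absurd hr (ht _)
  | split h₁ h₂ ih₁ ih₂ =>
    intro ht
    rename_i p' q' a' B' C'
    obtain ⟨hd₁, hm₁⟩ := ih₁ ht
    obtain ⟨hd₂, hm₂⟩ := ih₂ ht
    constructor
    · have hs : DEquiv [(p'+q', a')] ([(p',a')] ++ [(q',a')]) :=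
        dequiv_single (Or.inr (Or.inr (by simpa using SplitS.mk [] [] p' q' a')))
      exact hs.trans (dequiv_append hd₁ hd₂)
    · intro x hx
      rcases List.mem_append.1 hx with hx | hx
      · exact hm₁ x hx
      · exact hm₂ x hx

lemma mevol_of_terminal {D Z : PDist A} (hT : TerminalD R D) (h : MEvol R D Z) :
    DEquiv D Z := by
  induction h with
  | nil => exact dequiv_refl _
  | cons hf hm ih =>
    rename_i p a B ds Z'
    have ht : Terminal R a := hT (p, a) (by simp)
    have hds : TerminalD R ds := fun x hx => hT x (by simp [hx])
    obtain ⟨hd, _⟩ := frag_of_terminal hf ht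
    have : DEquiv ([(p,a)] ++ ds) (B ++ Z') := dequiv_append hd (ih hds)
    simpa using this

lemma reaches_of_terminal {D E : PDist A} (hT : TerminalD R D) (h : Reaches R D E) :
    DEquiv D E := by
  induction h with
  | refl => exact dequiv_refl _
  | tail _ hstep ih =>
    obtain ⟨Z, hM, hE⟩ := hstep
    have hT' := dequiv_terminal ih hT
    exact ih.trans ((mevol_of_terminal hT' hM).trans hE)

/- ### nonemptiness -/
lemma simStep_ne_nil {D E : PDist A} (h : SimStep D E) : E ≠ [] := by
  rcases h with h | h | h <;> cases h <;> simp

lemma dequiv_ne_nil {D E : PDist A} (h : DEquiv D E) (hD : D ≠ []) : E ≠ [] := by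
  induction h with
  | refl => exact hD
  | tail _ hstep _ => exact simStep_ne_nil hstep

lemma dequiv_nil {E : PDist A} (h : DEquiv ([] : PDist A) E) : E = [] := by
  rcases h.cases_head with hrfl | ⟨c, hc, _⟩
  · exact hrfl.symm
  · exact absurd rfl (simStep_ne_nil (simStep_symm hc))

lemma frag_ne_nil (hR : IsPARS R) {p : ℝ≥0} {a : A} {B : PDist A}
    (h : Frag R p a B) : B ≠ [] := by
  induction h with
  | keep p a => simp
  | evolve p hr =>
    rename_i a' X
    have hw := hR a' X hr
    intro hc
    have : X = [] := by
      cases X with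
      | nil => rfl
      | cons y Y => simp [scale] at hc
    rw [this] at hw
    simp [weight] at hw
  | split h₁ h₂ ih₁ ih₂ => simp [ih₁]

lemma mevol_ne_nil (hR : IsPARS R) {D Z : PDist A} (h : MEvol R D Z) (hD : D ≠ []) :
    Z ≠ [] := by
  cases h with
  | nil => exact absurd rfl hD
  | cons hf hm => simp [frag_ne_nil hR hf]

lemma reaches_ne_nil (hR : IsPARS R) {D E : PDist A} (h : Reaches R D E) (hD : D ≠ []) :
    E ≠ [] := by
  induction h with
  | refl => exact hD
  | tail _ hstep ih =>
    obtain ⟨Z, hM, hE⟩ := hstep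
    exact dequiv_ne_nil hE (mevol_ne_nil hR hM ih)

end PNL
namespace PNL
open PPARS Relation

variable {A : Type} {R : A → PDist A → Prop}

lemma wf_of_no_chain {α : Type} {r : α → α → Prop}
    (h : ¬ ∃ f : ℕ → α, ∀ n, r (f n) (f (n+1))) :
    WellFounded (fun x y => r y x) := by
  constructor
  intro a
  by_contra ha
  apply h
  have key : ∀ x : {x : α // ¬ Acc (fun x y => r y x) x},
      ∃ y : {x : α // ¬ Acc (fun x y => r y x) x}, r x.1 y.1 := by
    rintro ⟨x, hx⟩
    by_contra hy
    push_neg at hy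
    refine hx (Acc.intro x fun y hyx => ?_)
    by_contra hacc
    exact hy ⟨y, hacc⟩ hyx
  choose g hg using key
  refine ⟨fun n => (g^[n] ⟨a, ha⟩).1, fun n => ?_⟩
  simp only []
  rw [show n + 1 = n.succ from rfl, Function.iterate_succ_apply']
  exact hg _

/-- Targeted proper evolution of one entry. -/
lemma pevol1_surgery {a : A} {X : PDist A} (hX : R a X) (P S : PDist A) (p : ℝ≥0) :
    PEvol1 R (P ++ (p,a) :: S) (P ++ (scale p X ++ S)) := by
  induction P with
  | nil => simpa using PEvol1.evolve p hX (pevol_refl S)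
  | cons x P ih =>
    obtain ⟨q, b⟩ := x
    exact PEvol1.keep q b ih

/-- One element is an `R`-successor of another. -/
def StepRel (R : A → PDist A → Prop) (a b : A) : Prop :=
  ∃ X w, R a X ∧ (w, b) ∈ X

lemma acc_step_of_acc_pevol1
    (hwf : WellFounded (fun E D : PDist A => PEvol1 R D E)) :
    WellFounded (fun b a => StepRel R a b) := by
  have main : ∀ D : PDist A, ∀ p a, (p, a) ∈ D → Acc (fun b a => StepRel R a b) a := by
    intro D
    induction hwf.apply D with
    | intro D hD IH =>
      intro p a hmem
      constructor
      rintro b ⟨X, w, hRX, hwX⟩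
      obtain ⟨P, S, rfl⟩ := List.append_of_mem hmem
      have h1 : PEvol1 R (P ++ (p,a) :: S) (P ++ (scale p X ++ S)) := pevol1_surgery hRX P S p
      have hmem' : (p * w, b) ∈ P ++ (scale p X ++ S) := by
        refine List.mem_append.2 (Or.inr (List.mem_append.2 (Or.inl ?_)))
        simp only [scale, List.mem_map]
        exact ⟨(w, b), hwX, rfl⟩
      exact IH _ h1 (p*w) b hmem'
  constructor
  intro a
  exact main [(1, a)] 1 a (by simp)

/-- Every distribution reaches a terminal one. -/
lemma normalize (hwf : WellFounded (fun E D : PDist A => PEvol1 R D E)) (D : PDist A) :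
    ∃ N, Reaches R D N ∧ TerminalD R N := by
  induction hwf.apply D with
  | intro D hD IH =>
    by_cases hT : TerminalD R D
    · exact ⟨D, ReflTransGen.refl, hT⟩
    · have : ∃ pa ∈ D, ∃ X, R pa.2 X := by
        by_contra hc
        push_neg at hc
        exact hT fun pa hpa X => hc pa hpa X
      obtain ⟨⟨p, a⟩, hmem, X, hX⟩ := this
      obtain ⟨P, S, rfl⟩ := List.append_of_mem hmem
      have h1 : PEvol1 R (P ++ (p,a) :: S) (P ++ (scale p X ++ S)) := pevol1_surgery hX P S p
      obtain ⟨N, hN, hNT⟩ := IH _ h1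
      refine ⟨N, ReflTransGen.head ?_ hN, hNT⟩
      exact ⟨_, pevol_mevol (pevol1_pevol h1), dequiv_refl _⟩

end PNL
namespace PNL
open PPARS Relation

variable {A : Type} {R : A → PDist A → Prop}

/- ### unique normal forms -/
def UNF (R : A → PDist A → Prop) (K : PDist A) : Prop :=
  ∀ N M, Reaches R K N → TerminalD R N → Reaches R K M → TerminalD R M → DEquiv N M

lemma mevol_nil_inv {Z : PDist A} (h : MEvol R [] Z) : Z = [] := by
  cases h; rfl

lemma reaches_nil {E : PDist A} (h : Reaches R [] E) : E = [] := by
  induction h with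
  | refl => rfl
  | tail _ hstep ih =>
    subst ih
    obtain ⟨Z, hM, hE⟩ := hstep
    rw [mevol_nil_inv hM] at hE
    exact dequiv_nil hE

lemma unf_nil : UNF R ([] : PDist A) := by
  intro N M hN _ hM _
  rw [reaches_nil hN, reaches_nil hM]
  exact dequiv_refl _

lemma unf_append {K₁ K₂ : PDist A} (h₁ : UNF R K₁) (h₂ : UNF R K₂) :
    UNF R (K₁ ++ K₂) := by
  intro N M hN hTN hM hTM
  obtain ⟨N₁, N₂, hN₁, hN₂, hND⟩ := reaches_append_inv hN
  obtain ⟨M₁, M₂, hM₁, hM₂, hMD⟩ := reaches_append_inv hM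
  have hTN' := dequiv_terminal (dequiv_symm hND) hTN
  have hTM' := dequiv_terminal (dequiv_symm hMD) hTM
  have e₁ : DEquiv N₁ M₁ :=
    h₁ N₁ M₁ hN₁ (terminal_append_iff.1 hTN').1 hM₁ (terminal_append_iff.1 hTM').1
  have e₂ : DEquiv N₂ M₂ :=
    h₂ N₂ M₂ hN₂ (terminal_append_iff.1 hTN').2 hM₂ (terminal_append_iff.1 hTM').2
  exact (dequiv_symm hND).trans ((dequiv_append e₁ e₂).trans hMD)

lemma unf_of_mem {K : PDist A} (h : ∀ x ∈ K, ∀ q : ℝ≥0, UNF R [(q, x.2)]) :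
    UNF R K := by
  induction K with
  | nil => exact unf_nil
  | cons x K ih =>
    have hx : UNF R [x] := by
      have := h x (by simp) x.1
      simpa using this
    have hK : UNF R K := ih fun y hy q => h y (by simp [hy]) q
    have := unf_append hx hK
    simpa using this

/- ### rule mixtures -/
inductive SMix (R : A → PDist A → Prop) (a : A) : ℝ≥0 → PDist A → Prop
  | nil : SMix R a 0 []
  | cons {X : PDist A} {t : ℝ≥0} {S : PDist A} (u : ℝ≥0) :
      R a X → SMix R a t S → SMix R a (u+t) (scale u X ++ S)

lemma smix_append {a : A} {t u : ℝ≥0} {S T : PDist A}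
    (h₁ : SMix R a t S) (h₂ : SMix R a u T) : SMix R a (t+u) (S++T) := by
  induction h₁ with
  | nil => simpa using h₂
  | cons v hX hS ih =>
    have := SMix.cons v hX ih
    simpa [add_assoc, List.append_assoc] using this

lemma fragc {p : ℝ≥0} {a : A} {B : PDist A} (h : Frag R p a B) :
    (∃ t S, SMix R a t S ∧ t = p ∧ DEquiv B S) ∨
    (∃ s t S, SMix R a t S ∧ s + t = p ∧ DEquiv B ((s,a) :: S)) := by
  induction h with
  | keep p a =>
    exact Or.inr ⟨p, 0, [], SMix.nil, add_zero p, dequiv_refl _⟩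
  | evolve p hr =>
    left
    refine ⟨p + 0, scale p _ ++ [], SMix.cons p hr SMix.nil, add_zero p, ?_⟩
    rw [List.append_nil]
    exact dequiv_refl _
  | split h₁ h₂ ih₁ ih₂ =>
    rename_i p₁ p₂ a' B₁ B₂
    rcases ih₁ with ⟨t₁, S₁, hS₁, ht₁, hD₁⟩ | ⟨s₁, t₁, S₁, hS₁, ht₁, hD₁⟩ <;>
      rcases ih₂ with ⟨t₂, S₂, hS₂, ht₂, hD₂⟩ | ⟨s₂, t₂, S₂, hS₂, ht₂, hD₂⟩
    · left
      exact ⟨t₁ + t₂, S₁ ++ S₂, smix_append hS₁ hS₂, by rw [ht₁, ht₂],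
        dequiv_append hD₁ hD₂⟩
    · right
      refine ⟨s₂, t₁ + t₂, S₁ ++ S₂, smix_append hS₁ hS₂, ?_, ?_⟩
      · rw [add_left_comm, ht₂, ht₁]  -- s₂ + (t₁ + t₂) = t₁ + (s₂ + t₂) = p₁ + p₂
      · refine (dequiv_append hD₁ hD₂).trans ?_
        have hmv : S₁ ++ ((s₂,a') :: S₂) = (S₁ ++ [(s₂,a')]) ++ S₂ := by simp
        rw [hmv]
        have := dequiv_right S₂ (dequiv_bubble S₁ (s₂, a'))
        simpa [DEquiv] using this
    · right
      refine ⟨s₁, t₁ + t₂, S₁ ++ S₂, smix_append hS₁ hS₂, ?_, ?_⟩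
      · rw [← add_assoc, ht₁, ht₂]
      · refine (dequiv_append hD₁ hD₂).trans ?_
        exact dequiv_refl _
    · right
      refine ⟨s₁ + s₂, t₁ + t₂, S₁ ++ S₂, smix_append hS₁ hS₂, ?_, ?_⟩
      · rw [add_add_add_comm, ht₁, ht₂]
      · refine (dequiv_append hD₁ hD₂).trans ?_
        have hmove : DEquiv (S₁ ++ ((s₂,a') :: S₂)) ((s₂,a') :: (S₁ ++ S₂)) := by
          have hmv : S₁ ++ ((s₂,a') :: S₂) = (S₁ ++ [(s₂,a')]) ++ S₂ := by simp
          rw [hmv]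
          have := dequiv_right S₂ (dequiv_bubble S₁ (s₂, a'))
          simpa using this
        have step1 : DEquiv (((s₁,a') :: S₁) ++ ((s₂,a') :: S₂))
            ((s₁,a') :: ((s₂,a') :: (S₁ ++ S₂))) := dequiv_cons (s₁,a') hmove
        refine step1.trans ?_
        refine dequiv_single (Or.inr (Or.inl ?_))
        simpa using JoinS.mk [] (S₁ ++ S₂) s₁ s₂ a'

/- ### class of terminal reducts -/
def NFto (R : A → PDist A → Prop) (T : PDist A) (t : ℝ≥0) (H : PDist A) : Prop :=
  (∀ N, Reaches R H N → TerminalD R N → DEquiv N (scale t T)) ∨ (H = [] ∧ t = 0)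

lemma nfto_append {T : PDist A} {t₁ t₂ : ℝ≥0} {H₁ H₂ : PDist A}
    (h₁ : NFto R T t₁ H₁) (h₂ : NFto R T t₂ H₂) : NFto R T (t₁+t₂) (H₁++H₂) := by
  rcases h₁ with h₁ | ⟨rfl, rfl⟩
  · rcases h₂ with h₂ | ⟨rfl, rfl⟩
    · left
      intro N hN hNt
      obtain ⟨N₁, N₂, hN₁, hN₂, hND⟩ := reaches_append_inv hN
      have hTN' := dequiv_terminal (dequiv_symm hND) hNt
      have e₁ := h₁ N₁ hN₁ (terminal_append_iff.1 hTN').1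
      have e₂ := h₂ N₂ hN₂ (terminal_append_iff.1 hTN').2
      exact (dequiv_symm hND).trans ((dequiv_append e₁ e₂).trans (scale_merge t₁ t₂ T))
    · left
      intro N hN hNt
      rw [List.append_nil] at hN
      rw [add_zero]
      exact h₁ N hN hNt
  · rcases h₂ with h₂ | ⟨rfl, rfl⟩
    · left
      intro N hN hNt
      rw [List.nil_append] at hN
      rw [zero_add]
      exact h₂ N hN hNt
    · right
      simp

lemma nfto_mevol {T : PDist A} {t : ℝ≥0} {H Z : PDist A}
    (h : NFto R T t H) (hM : MEvol R H Z) : NFto R T t Z := by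
  rcases h with h | ⟨rfl, rfl⟩
  · left
    intro N hN hNt
    exact h N ((mevol_reaches hM).trans hN) hNt
  · rw [mevol_nil_inv hM]
    right; exact ⟨rfl, rfl⟩

lemma smix_nfto {a : A} {Nrep : PDist A}
    (hrule : ∀ X, R a X → ∀ u : ℝ≥0, ∀ N, Reaches R (scale u X) N → TerminalD R N →
      DEquiv N (scale u Nrep)) :
    ∀ {t : ℝ≥0} {S : PDist A}, SMix R a t S → NFto R Nrep t S := by
  intro t S h
  induction h with
  | nil => exact Or.inr ⟨rfl, rfl⟩
  | cons u hX hS ih => exact nfto_append (Or.inl (hrule _ hX u)) ih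

/- ### the invariant along reductions from a single element -/
lemma invariant {a : A} {Nrep : PDist A} (p : ℝ≥0)
    (hrule : ∀ X, R a X → ∀ u : ℝ≥0, ∀ N, Reaches R (scale u X) N → TerminalD R N →
      DEquiv N (scale u Nrep)) :
    ∀ G, Reaches R [(p,a)] G →
      ∃ t H, NFto R Nrep t H ∧
        ((∃ s, s + t = p ∧ DEquiv G ((s,a) :: H)) ∨ (t = p ∧ DEquiv G H)) := by
  intro G hG
  induction hG with
  | refl =>
    exact ⟨0, [], Or.inr ⟨rfl, rfl⟩, Or.inl ⟨p, add_zero p, dequiv_refl _⟩⟩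
  | tail hpre hstep ih =>
    obtain ⟨t, H, hNFH, hcase⟩ := ih
    obtain ⟨Z₀, hM₀, hE₀⟩ := hstep
    rcases hcase with ⟨s, hs, hGdec⟩ | ⟨ht, hGdec⟩
    · obtain ⟨Z, hZM, hZE⟩ := sim_star (dequiv_symm hGdec) hM₀
      obtain ⟨B, ZH, hfrag, hMH, rfl⟩ := mevol_cons_inv hZM
      rcases fragc hfrag with ⟨tS, S, hS, htS, hBS⟩ | ⟨s', tS, S, hS, hsum, hBS⟩
      · refine ⟨tS + t, S ++ ZH,
          nfto_append (smix_nfto hrule hS) (nfto_mevol hNFH hMH), Or.inr ⟨?_, ?_⟩⟩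
        · rw [htS]; exact hs
        · refine (dequiv_symm hE₀).trans ((dequiv_symm hZE).trans ?_)
          exact dequiv_append hBS (dequiv_refl ZH)
      · refine ⟨tS + t, S ++ ZH,
          nfto_append (smix_nfto hrule hS) (nfto_mevol hNFH hMH), Or.inl ⟨s', ?_, ?_⟩⟩
        · rw [← add_assoc, hsum]; exact hs
        · refine (dequiv_symm hE₀).trans ((dequiv_symm hZE).trans ?_)
          have := dequiv_append hBS (dequiv_refl ZH)
          simpa [DEquiv] using this
    · obtain ⟨Z, hZM, hZE⟩ := sim_star (dequiv_symm hGdec) hM₀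
      refine ⟨t, Z, nfto_mevol hNFH hZM, Or.inr ⟨ht, ?_⟩⟩
      exact (dequiv_symm hE₀).trans (dequiv_symm hZE)

/- ### main induction -/
theorem unf_elem (hR : IsPARS R)
    (hwf : WellFounded (fun E D : PDist A => PEvol1 R D E))
    (hLC : ∀ D E F : PDist A, PEvol1 R D E → PEvol1 R D F →
      ∃ C, ReflTransGen (Red R) E C ∧ ReflTransGen (Red R) F C) :
    ∀ (a : A) (p : ℝ≥0), UNF R [(p,a)] := by
  have hwfS := acc_step_of_acc_pevol1 hwf
  intro a
  induction hwfS.apply a with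
  | intro a ha IH =>
    by_cases hterm : Terminal R a
    · intro p N M hN hTN hM hTM
      have hT1 : TerminalD R [(p,a)] := by
        rintro pa hpa
        simp only [List.mem_singleton] at hpa
        subst hpa; exact hterm
      exact (dequiv_symm (reaches_of_terminal hT1 hN)).trans (reaches_of_terminal hT1 hM)
    · have hex : ∃ X, R a X := by
        unfold Terminal at hterm; push_neg at hterm; exact hterm
      obtain ⟨Xh, hXh⟩ := hex
      have hbelow : ∀ K : PDist A, (∀ x ∈ K, StepRel R a x.2) → UNF R K := by
        intro K hK
        exact unf_of_mem fun x hx q => IH x.2 (hK x hx) q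
      have hXunf : ∀ X, R a X → ∀ u : ℝ≥0, UNF R (scale u X) := by
        intro X hRX u
        refine hbelow _ ?_
        intro x hx
        simp only [scale, List.mem_map] at hx
        obtain ⟨⟨w, b⟩, hb, rfl⟩ := hx
        exact ⟨X, w, hRX, hb⟩
      obtain ⟨Nrep, hNrep_r, hNrep_t⟩ := normalize hwf Xh
      have hrule : ∀ X, R a X → ∀ u : ℝ≥0, ∀ N, Reaches R (scale u X) N → TerminalD R N →
          DEquiv N (scale u Nrep) := by
        intro X hRX u N hNr hNt
        have e1 : PEvol1 R [(1,a)] (scale 1 Xh ++ []) := PEvol1.evolve 1 hXh PEvol.nil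
        have e2 : PEvol1 R [(1,a)] (scale 1 X ++ []) := PEvol1.evolve 1 hRX PEvol.nil
        obtain ⟨C, hC1, hC2⟩ := hLC _ _ _ e1 e2
        rw [List.append_nil, scale_one] at hC1 hC2
        replace hC1 : Reaches R Xh C := reaches_iff_red_rtg.2 hC1
        replace hC2 : Reaches R X C := reaches_iff_red_rtg.2 hC2
        obtain ⟨NC, hNC, hNCt⟩ := normalize hwf C
        have hXh_unf : UNF R Xh := by
          have := hXunf Xh hXh 1; rwa [scale_one] at this
        have hNC_rep : DEquiv NC Nrep :=
          hXh_unf NC Nrep (hC1.trans hNC) hNCt hNrep_r hNrep_t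
        have hreach : Reaches R (scale u X) (scale u NC) := reaches_scale u (hC2.trans hNC)
        have h3 : DEquiv N (scale u NC) :=
          hXunf X hRX u N (scale u NC) hNr hNt hreach (terminal_scale hNCt)
        exact h3.trans (dequiv_scale u hNC_rep)
      intro p
      have final : ∀ N, Reaches R [(p,a)] N → TerminalD R N → DEquiv N (scale p Nrep) := by
        intro N hN hTN
        obtain ⟨t, H, hNFH, hcase⟩ := invariant p hrule N hN
        rcases hcase with ⟨s, hs, hdec⟩ | ⟨ht, hdec⟩
        · exfalso
          have hT : TerminalD R ((s,a) :: H) := dequiv_terminal hdec hTN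
          exact hterm (hT (s,a) (by simp))
        · rcases hNFH with hH | ⟨hHnil, htz⟩
          · rw [← ht]
            exact hH N (dequiv_reaches (dequiv_symm hdec)) hTN
          · exfalso
            subst hHnil
            have hNnil : N = [] := dequiv_nil (dequiv_symm hdec)
            exact reaches_ne_nil hR hN (by simp) hNnil
      intro N M hN hTN hM hTM
      exact (final N hN hTN).trans (dequiv_symm (final M hM hTM))

end PNL



open PPARS Relation in
/-- Probabilistic Newman's lemma: strong normalisation (no infinite `⇒_P¹`-chain)
plus local confluence implies distribution confluence. -/
theorem prob_newman {A : Type} (R : A → PDist A → Prop) (hR : IsPARS R)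
    (hSN : ¬ ∃ f : ℕ → PDist A, ∀ n, PEvol1 R (f n) (f (n + 1)))
    (hLC : ∀ D E F : PDist A, PEvol1 R D E → PEvol1 R D F →
      ∃ C, ReflTransGen (Red R) E C ∧ ReflTransGen (Red R) F C) :
    Confluent (Red R) := by
  have hwf : WellFounded (fun E D : PDist A => PEvol1 R D E) := PNL.wf_of_no_chain hSN
  have hUNF : ∀ D : PDist A, PNL.UNF R D :=
    fun D => PNL.unf_of_mem (fun x _ q => PNL.unf_elem hR hwf hLC x.2 q)
  intro D E F hDE hDF
  replace hDE : PNL.Reaches R D E := PNL.reaches_iff_red_rtg.2 hDE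
  replace hDF : PNL.Reaches R D F := PNL.reaches_iff_red_rtg.2 hDF
  obtain ⟨NE, hNE, hNEt⟩ := PNL.normalize hwf E
  obtain ⟨NF, hNF, hNFt⟩ := PNL.normalize hwf F
  have h1 : DEquiv NE NF := hUNF D NE NF (hDE.trans hNE) hNEt (hDF.trans hNF) hNFt
  refine ⟨NF, ?_, ?_⟩
  · refine PNL.reaches_iff_red_rtg.1 (hNE.tail ?_)
    exact ⟨NE, PNL.mevol_refl NE, h1⟩
  · exact PNL.reaches_iff_red_rtg.1 hNF
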